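/- arXiv:2111.10211 — 2 statements merged into one kernel-verified Lean document; each statement's English description precedes it below -/
import Mathlib

section
/- For every integer k ≥ 2, the number 1818, 18018, 180018, ... formed as 18·10^k + 18 (i.e., two copies of '18' with k−2 zeros in between) is a v-palindrome in base ten. -/
/-- `v n` sums, over the prime factorization of `n`, each prime plus its
exponent when the exponent is at least `2` (primes with exponent `1`
contribute just the prime). -/
def v (n : ℕ) : ℕ :=
  ∑ p ∈ n.primeFactors, (p + if 2 ≤ n.factorization p then n.factorization p else 0)

/-- Base-`b` digit reversal. -/
def revDigits (b n : ℕ) : ℕ := Nat.ofDigits b (Nat.digits b n).reverse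

/-- `n` is a v-palindrome in base `b`. -/
def IsVPalindrome (b n : ℕ) : Prop :=
  ¬ b ∣ n ∧ n ≠ revDigits b n ∧ v n = v (revDigits b n)

lemma v_mul_coprime {a b : ℕ} (ha : a ≠ 0) (hb : b ≠ 0) (h : Nat.Coprime a b) :
    v (a * b) = v a + v b := by
  unfold v
  rw [Nat.primeFactors_mul ha hb, Finset.sum_union (Nat.Coprime.disjoint_primeFactors h)]
  congr 1
  · apply Finset.sum_congr rfl
    intro p hp
    have hpb : (b).factorization p = 0 := by
      apply Nat.factorization_eq_zero_of_not_dvd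
      intro hdvd
      have hpa := Nat.dvd_of_mem_primeFactors hp
      exact ((Nat.Prime.coprime_iff_not_dvd (Nat.prime_of_mem_primeFactors hp)).mp
        (h.coprime_dvd_left hpa)) hdvd
    rw [Nat.factorization_mul ha hb]
    simp [hpb]
  · apply Finset.sum_congr rfl
    intro p hp
    have hpa : (a).factorization p = 0 := by
      apply Nat.factorization_eq_zero_of_not_dvd
      intro hdvd
      have hpb := Nat.dvd_of_mem_primeFactors hp
      exact ((Nat.Prime.coprime_iff_not_dvd (Nat.prime_of_mem_primeFactors hp)).mp
        (h.symm.coprime_dvd_left hpb)) hdvd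
    rw [Nat.factorization_mul ha hb]
    simp [hpa]

lemma v_prime_pow {p e : ℕ} (hp : p.Prime) (he : e ≠ 0) :
    v (p ^ e) = p + if 2 ≤ e then e else 0 := by
  unfold v
  rw [Nat.primeFactors_prime_pow he hp]
  simp [hp.factorization_pow]

lemma v_eighteen : v 18 = 7 := by
  have h18 : (18 : ℕ) = 2 ^ 1 * 3 ^ 2 := by norm_num
  rw [h18, v_mul_coprime (by norm_num) (by norm_num) (by norm_num),
    v_prime_pow Nat.prime_two one_ne_zero, v_prime_pow Nat.prime_three two_ne_zero]
  norm_num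

lemma v_eightyone : v 81 = 7 := by
  have h : (81 : ℕ) = 3 ^ 4 := by norm_num
  rw [h, v_prime_pow Nat.prime_three (by norm_num)]
  norm_num

lemma ofDigits_replicate_zero (b j : ℕ) : Nat.ofDigits b (List.replicate j 0) = 0 := by
  induction j with
  | zero => simp [Nat.ofDigits]
  | succ j ih => simp [List.replicate_succ, Nat.ofDigits, ih]

theorem stmt_6 (k : ℕ) (hk : 2 ≤ k) : IsVPalindrome 10 (18 * 10 ^ k + 18) := by
  obtain ⟨j, rfl⟩ : ∃ j, k = 2 + j := ⟨k - 2, by omega⟩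
  have hd18 : Nat.digits 10 18 = [8, 1] := by norm_num
  have hdig : Nat.digits 10 (18 * 10 ^ (2 + j) + 18) =
      [8, 1] ++ List.replicate j 0 ++ [8, 1] := by
    have := Nat.digits_append_zeroes_append_digits (b := 10) (k := j) (m := 18) (n := 18)
      (by norm_num) (by norm_num)
    rw [hd18] at this
    simp only [List.length_cons, List.length_nil] at this
    rw [this]
    ring_nf
  have hrev : revDigits 10 (18 * 10 ^ (2 + j) + 18) = 81 * 10 ^ (2 + j) + 81 := by
    unfold revDigits
    rw [hdig]
    simp only [List.reverse_append, List.reverse_replicate]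
    rw [show ([8,1]:List ℕ).reverse = [1,8] by rfl]
    rw [Nat.ofDigits_append, Nat.ofDigits_append]
    simp [Nat.ofDigits, ofDigits_replicate_zero]
    ring
  -- arithmetic facts about m := 10 ^ (2 + j) + 1
  set m : ℕ := 10 ^ (2 + j) + 1 with hm
  have hm0 : m ≠ 0 := by positivity
  have h2 : ¬ (2 ∣ m) := by
    have : 10 ^ (2 + j) % 2 = 0 := by
      rw [Nat.pow_mod]; norm_num
    omega
  have h3 : ¬ (3 ∣ m) := by
    have : 10 ^ (2 + j) % 3 = 1 := by
      rw [Nat.pow_mod]; norm_num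
    omega
  have hcop : Nat.Coprime 18 m := by
    have c2 : Nat.Coprime 2 m := (Nat.Prime.coprime_iff_not_dvd Nat.prime_two).mpr h2
    have c3 : Nat.Coprime 3 m := (Nat.Prime.coprime_iff_not_dvd Nat.prime_three).mpr h3
    have : Nat.Coprime (2 * 3 ^ 2) m := Nat.Coprime.mul c2 (c3.pow_left 2)
    simpa using this
  have hn : 18 * 10 ^ (2 + j) + 18 = 18 * m := by rw [hm]; ring
  have hr : 81 * 10 ^ (2 + j) + 81 = 81 * m := by rw [hm]; ring
  have hpow : (10:ℕ) ^ (2 + j) = 100 * 10 ^ j := by ring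
  have ht : 1 ≤ 10 ^ j := Nat.one_le_pow _ _ (by norm_num)
  refine ⟨?_, ?_, ?_⟩
  · rw [hpow]; omega
  · rw [hrev, hpow]; omega
  · rw [hrev, hn, hr, v_mul_coprime (by norm_num) hm0 hcop,
      v_mul_coprime (by norm_num) hm0 ?_, v_eighteen, v_eightyone]
    have c3 : Nat.Coprime 3 m := (Nat.Prime.coprime_iff_not_dvd Nat.prime_three).mpr h3
    have : Nat.Coprime (3 ^ 4) m := c3.pow_left 4
    simpa using this
end

section
/- Let k ≡ 4 (mod 11) be a positive integer, and set b = 30k, a = (150k − 6)/11, c = (180k − 5)/11, t = (900k² − 1)/11. Then a, c, t are positive integers satisfying a < c < b, gcd(t, 30) = 1, ab + c = 5t, and cb + a = 6t; consequently the two-digit number ab + c is a v-palindrome in base 30k. -/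
lemma v_prime {p : ℕ} (hp : p.Prime) : v p = p := by
  unfold v
  rw [hp.primeFactors]
  simp [hp.factorization]

lemma v_mul_coprime_s14 {m n : ℕ} (hm : m ≠ 0) (hn : n ≠ 0) (h : Nat.Coprime m n) :
    v (m * n) = v m + v n := by
  unfold v
  have hdisj := Nat.Coprime.disjoint_primeFactors h
  rw [Nat.Coprime.primeFactors_mul h, Finset.sum_union hdisj]
  congr 1
  · apply Finset.sum_congr rfl
    intro p hp
    have hpp := Nat.prime_of_mem_primeFactors hp
    have hpd : ¬ p ∣ n := by
      intro hd
      have := Nat.eq_one_of_dvd_coprimes h (Nat.dvd_of_mem_primeFactors hp) hd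
      exact hpp.one_lt.ne' this
    have : (m * n).factorization p = m.factorization p := by
      rw [Nat.factorization_mul hm hn]
      simp [Nat.factorization_eq_zero_of_not_dvd hpd]
    rw [this]
  · apply Finset.sum_congr rfl
    intro p hp
    have hpp := Nat.prime_of_mem_primeFactors hp
    have hpd : ¬ p ∣ m := by
      intro hd
      have := Nat.eq_one_of_dvd_coprimes h hd (Nat.dvd_of_mem_primeFactors hp)
      exact hpp.one_lt.ne' this
    have : (m * n).factorization p = n.factorization p := by
      rw [Nat.factorization_mul hm hn]
      simp [Nat.factorization_eq_zero_of_not_dvd hpd]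
    rw [this]

lemma digits_two_eq {b a c : ℕ} (hb : 2 ≤ b) (ha : 0 < a) (hab : a < b) (hc : c < b) :
    Nat.digits b (a * b + c) = [c, a] := by
  have hb1 : 1 < b := hb
  have hn : 0 < a * b + c := by positivity
  rw [Nat.digits_def' hb1 hn]
  have h1 : (a * b + c) % b = c := by
    rw [add_comm, Nat.add_mul_mod_self_right, Nat.mod_eq_of_lt hc]
  have h2 : (a * b + c) / b = a := by
    rw [mul_comm a b, Nat.mul_add_div (by omega), Nat.div_eq_of_lt hc, add_zero]
  rw [h1, h2, Nat.digits_def' hb1 ha, Nat.mod_eq_of_lt hab,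
    Nat.div_eq_of_lt hab]
  simp

theorem stmt_14 (k : ℕ) (hk : 0 < k) (hmod : k % 11 = 4) :
    let b := 30 * k
    let a := (150 * k - 6) / 11
    let c := (180 * k - 5) / 11
    let t := (900 * k ^ 2 - 1) / 11
    0 < a ∧ 0 < c ∧ 0 < t ∧ a < c ∧ c < b ∧ Nat.gcd t 30 = 1 ∧
      a * b + c = 5 * t ∧ c * b + a = 6 * t ∧ IsVPalindrome b (a * b + c) := by
  obtain ⟨m, rfl⟩ : ∃ m, k = 11 * m + 4 := ⟨k / 11, by omega⟩
  intro b a c t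
  have hb : b = 330 * m + 120 := by show 30 * (11 * m + 4) = _; ring
  have ha : a = 150 * m + 54 := by
    show (150 * (11 * m + 4) - 6) / 11 = _; omega
  have hc : c = 180 * m + 65 := by
    show (180 * (11 * m + 4) - 5) / 11 = _; omega
  have ht : t = 9900 * m ^ 2 + 7200 * m + 1309 := by
    show (900 * (11 * m + 4) ^ 2 - 1) / 11 = _
    have hsq : (11 * m + 4) ^ 2 = 121 * m ^ 2 + 88 * m + 16 := by ring
    rw [hsq]
    generalize m ^ 2 = s
    omega
  have hgcd : Nat.gcd t 30 = 1 := by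
    have h30 : t % 30 = 19 := by
      rw [ht]; generalize m ^ 2 = s; omega
    rw [Nat.gcd_comm, Nat.gcd_rec, h30]; decide
  have h5 : a * b + c = 5 * t := by rw [ha, hb, hc, ht]; ring
  have h6 : c * b + a = 6 * t := by rw [ha, hb, hc, ht]; ring
  have ht0 : 0 < t := by rw [ht]; positivity
  have ha0 : 0 < a := by rw [ha]; positivity
  have hc0 : 0 < c := by rw [hc]; positivity
  have hac : a < c := by rw [ha, hc]; omega
  have hcb : c < b := by rw [hc, hb]; omega
  have hab2 : a < b := by rw [ha, hb]; omega
  have hb2 : 2 ≤ b := by rw [hb]; omega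
  have hrev : revDigits b (a * b + c) = c * b + a := by
    unfold revDigits
    rw [digits_two_eq hb2 ha0 hab2 hcb]
    simp [Nat.ofDigits]
    ring
  have hct : Nat.Coprime t 30 := hgcd
  have hct5 : Nat.Coprime 5 t := (hct.coprime_dvd_right (by norm_num)).symm
  have hct6 : Nat.Coprime 6 t := (hct.coprime_dvd_right (by norm_num)).symm
  have hv5 : v (5 * t) = 5 + v t := by
    rw [v_mul_coprime_s14 (by norm_num) ht0.ne' hct5, v_prime (by norm_num)]
  have hv6 : v (6 * t) = 5 + v t := by
    rw [v_mul_coprime_s14 (by norm_num) ht0.ne' hct6]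
    have : v 6 = 5 := by
      have : (6 : ℕ) = 2 * 3 := by norm_num
      rw [this, v_mul_coprime_s14 (by norm_num) (by norm_num) (by norm_num),
        v_prime Nat.prime_two, v_prime Nat.prime_three]
    rw [this]
  refine ⟨ha0, hc0, ht0, hac, hcb, hgcd, h5, h6, ?_, ?_, ?_⟩
  · intro hdvd
    have : b ∣ c := (Nat.dvd_add_right ⟨a, by ring⟩).mp hdvd
    have := Nat.le_of_dvd hc0 this
    omega
  · rw [hrev, h5, h6]
    omega
  · rw [hrev, h5, h6, hv5, hv6]
end
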